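/- (Freeness lemma) Let R be a commutative ring and A an m×n matrix over R such that D_{k+1}(A) = 0 and some k×k minor of A is a unit of R. Then A is simple of rank k: there exist invertible matrices U ∈ GL_m(R) and V ∈ GL_n(R) such that A = U · I_{k,m,n} · V, where I_{k,m,n} denotes the m×n matrix whose first k diagonal entries are 1 and all other entries are 0. -/
import Mathlib


open Matrix

/-- The `k`-th determinantal ideal of a matrix. -/
noncomputable def detIdeal {R : Type*} [CommRing R] {m n : ℕ} (k : ℕ)
    (A : Matrix (Fin m) (Fin n) R) : Ideal R :=
  Ideal.span {x | ∃ (α : Fin k → Fin m) (β : Fin k → Fin n),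
    StrictMono α ∧ StrictMono β ∧ x = (A.submatrix α β).det}

/-- `I_{k,m,n}`: the `m × n` matrix with the first `k` diagonal entries equal to `1`
and all other entries `0`. -/
def stdRankMatrix (R : Type*) [CommRing R] (k m n : ℕ) : Matrix (Fin m) (Fin n) R :=
  Matrix.of fun i j => if (i : ℕ) = (j : ℕ) ∧ (i : ℕ) < k then 1 else 0

section Aux

variable {R : Type*} [CommRing R] {m n k : ℕ}

lemma strictMono_minor_zero (A : Matrix (Fin m) (Fin n) R) (hA : detIdeal (k + 1) A = ⊥)
    {f : Fin (k + 1) → Fin m} {g : Fin (k + 1) → Fin n}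
    (hf : StrictMono f) (hg : StrictMono g) : (A.submatrix f g).det = 0 := by
  have h : (A.submatrix f g).det ∈ detIdeal (k + 1) A :=
    Ideal.subset_span ⟨f, g, hf, hg, rfl⟩
  rwa [hA, Ideal.mem_bot] at h

lemma gen_minor_zero (A : Matrix (Fin m) (Fin n) R) (hA : detIdeal (k + 1) A = ⊥)
    (f : Fin (k + 1) → Fin m) (g : Fin (k + 1) → Fin n) :
    (A.submatrix f g).det = 0 := by
  by_cases hf : Function.Injective f
  · by_cases hg : Function.Injective g
    · set σ := Tuple.sort f with hσ
      set τ := Tuple.sort g with hτ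
      have hfσ : StrictMono (f ∘ σ) :=
        (Tuple.monotone_sort f).strictMono_of_injective (hf.comp σ.injective)
      have hgτ : StrictMono (g ∘ τ) :=
        (Tuple.monotone_sort g).strictMono_of_injective (hg.comp τ.injective)
      have h0 : (A.submatrix (f ∘ σ) (g ∘ τ)).det = 0 :=
        strictMono_minor_zero A hA hfσ hgτ
      have hsub : A.submatrix f g
          = ((A.submatrix (f ∘ σ) (g ∘ τ)).submatrix (⇑σ.symm) id).submatrix id (⇑τ.symm) := by
        ext i j
        simp
      rw [hsub, Matrix.det_permute', Matrix.det_permute, h0, mul_zero, mul_zero]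
    · obtain ⟨a, b, hab, hne⟩ := Function.not_injective_iff.mp hg
      exact Matrix.det_zero_of_column_eq hne (fun r => by simp [hab])
  · obtain ⟨a, b, hab, hne⟩ := Function.not_injective_iff.mp hf
    exact Matrix.det_zero_of_row_eq hne (funext fun c => by simp [hab])

end Aux

/-- Freeness lemma. -/
theorem stmt4 {R : Type*} [CommRing R] {m n k : ℕ}
    (A : Matrix (Fin m) (Fin n) R) (hA : detIdeal (k + 1) A = ⊥)
    (hminor : ∃ (α : Fin k → Fin m) (β : Fin k → Fin n),
      StrictMono α ∧ StrictMono β ∧ IsUnit (A.submatrix α β).det) :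
    ∃ (U : Matrix (Fin m) (Fin m) R) (V : Matrix (Fin n) (Fin n) R),
      IsUnit U.det ∧ IsUnit V.det ∧ A = U * stdRankMatrix R k m n * V := by
  classical
  obtain ⟨α, β, hα, hβ, hdet⟩ := hminor
  have hkm : k ≤ m := by simpa using Fintype.card_le_of_injective α hα.injective
  have hkn : k ≤ n := by simpa using Fintype.card_le_of_injective β hβ.injective
  set B : Matrix (Fin k) (Fin k) R := A.submatrix α β with hBdef
  haveI : Invertible B := B.invertibleOfIsUnitDet hdet
  set P : Matrix (Fin m) (Fin k) R := A.submatrix id β with hPdef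
  set Q : Matrix (Fin k) (Fin n) R := A.submatrix α id with hQdef
  set K : Matrix (Fin k) (Fin n) R := ⅟B * Q with hKdef
  -- Step 1 : A = P * K
  have hPK : A = P * K := by
    ext i j
    set C : Matrix (Fin 1) (Fin k) R := P.submatrix (fun _ : Fin 1 => i) id with hCdef
    set D : Matrix (Fin k) (Fin 1) R := Q.submatrix id (fun _ : Fin 1 => j) with hDdef
    set E : Matrix (Fin 1) (Fin 1) R := Matrix.of (fun _ _ : Fin 1 => A i j) with hEdef
    have heq : fromBlocks B D C E
        = A.submatrix (Sum.elim α fun _ => i) (Sum.elim β fun _ => j) := by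
      ext x y
      rcases x with x | x <;> rcases y with y | y <;>
        simp [hBdef, hCdef, hDdef, hEdef, hPdef, hQdef, Matrix.fromBlocks]
    have h1 : (fromBlocks B D C E).det = 0 := by
      rw [heq]
      have e := (finSumFinEquiv : Fin k ⊕ Fin 1 ≃ Fin (k + 1))
      have hsub : A.submatrix (Sum.elim α fun _ => i) (Sum.elim β fun _ => j)
          = (A.submatrix ((Sum.elim α fun _ => i) ∘ ⇑finSumFinEquiv.symm)
              ((Sum.elim β fun _ => j) ∘ ⇑finSumFinEquiv.symm)).submatrix
              (⇑(finSumFinEquiv : Fin k ⊕ Fin 1 ≃ Fin (k + 1)))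
              (⇑(finSumFinEquiv : Fin k ⊕ Fin 1 ≃ Fin (k + 1))) := by
        ext x y; simp
      rw [hsub, Matrix.det_submatrix_equiv_self]
      exact gen_minor_zero A hA _ _
    rw [Matrix.det_fromBlocks₁₁] at h1
    have h2 : (E - C * ⅟B * D).det = 0 := by
      have := hdet
      exact (hdet.mul_right_eq_zero).mp h1
    rw [Matrix.det_fin_one] at h2
    have h3 : A i j = (C * ⅟B * D) 0 0 := by
      have := sub_eq_zero.mp (by simpa [Matrix.sub_apply, hEdef] using h2)
      simpa [hEdef] using this
    have h4 : (C * ⅟B * D) 0 0 = (P * K) i j := by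
      rw [hKdef, ← Matrix.mul_assoc]
      simp [hCdef, hDdef, Matrix.mul_apply]
    rw [h3, h4]
  -- Step 2 : the reindexing equivalences
  have hm' : k + (m - k) = m := by omega
  have hn' : k + (n - k) = n := by omega
  let fM : Fin k ⊕ Fin (m - k) ≃ Fin m := finSumFinEquiv.trans (finCongr hm')
  let fN : Fin k ⊕ Fin (n - k) ≃ Fin n := finSumFinEquiv.trans (finCongr hn')
  have cardM : Fintype.card {x : Fin m // x ∉ Set.range α} = m - k := by
    have hrange : Fintype.card {x : Fin m // x ∈ Set.range α} = k := by
      rw [Fintype.card_congr (Equiv.ofInjective α hα.injective).symm, Fintype.card_fin]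
    rw [Fintype.card_subtype_compl, hrange, Fintype.card_fin]
  have cardN : Fintype.card {x : Fin n // x ∉ Set.range β} = n - k := by
    have hrange : Fintype.card {x : Fin n // x ∈ Set.range β} = k := by
      rw [Fintype.card_congr (Equiv.ofInjective β hβ.injective).symm, Fintype.card_fin]
    rw [Fintype.card_subtype_compl, hrange, Fintype.card_fin]
  let eγ : Fin (m - k) ≃ {x : Fin m // x ∉ Set.range α} :=
    (Fintype.equivFinOfCardEq cardM).symm
  let eδ : Fin (n - k) ≃ {x : Fin n // x ∉ Set.range β} :=
    (Fintype.equivFinOfCardEq cardN).symm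
  let eM : Fin k ⊕ Fin (m - k) ≃ Fin m :=
    (Equiv.sumCongr (Equiv.ofInjective α hα.injective) eγ).trans
      (Equiv.sumCompl (· ∈ Set.range α))
  let eN : Fin k ⊕ Fin (n - k) ≃ Fin n :=
    (Equiv.sumCongr (Equiv.ofInjective β hβ.injective) eδ).trans
      (Equiv.sumCompl (· ∈ Set.range β))
  have heM : ∀ t, eM (Sum.inl t) = α t := fun t => rfl
  have heN : ∀ t, eN (Sum.inl t) = β t := fun t => rfl
  -- Step 3 : the block matrices
  let Ut : Matrix (Fin k ⊕ Fin (m - k)) (Fin k ⊕ Fin (m - k)) R :=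
    fromBlocks B 0 (P.submatrix (fun s => eM (Sum.inr s)) id) 1
  have hK1 : K.submatrix id β = 1 := by
    have : K.submatrix id β = ⅟B * B := by
      ext s t
      simp [hKdef, hQdef, hBdef, Matrix.mul_apply]
    rw [this, invOf_mul_self]
  let Vt : Matrix (Fin k ⊕ Fin (n - k)) (Fin k ⊕ Fin (n - k)) R :=
    fromBlocks (K.submatrix id β) (K.submatrix id (fun s => eN (Sum.inr s))) 0 1
  haveI : Invertible (K.submatrix id β) :=
    (K.submatrix id β).invertibleOfIsUnitDet (by rw [hK1]; simp)
  haveI : Invertible (1 : Matrix (Fin (m - k)) (Fin (m - k)) R) := invertibleOne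
  haveI : Invertible (1 : Matrix (Fin (n - k)) (Fin (n - k)) R) := invertibleOne
  haveI : Invertible Ut := Matrix.fromBlocksZero₁₂Invertible B _ 1
  haveI : Invertible Vt := Matrix.fromBlocksZero₂₁Invertible (K.submatrix id β) _ 1
  let U : Matrix (Fin m) (Fin m) R := Ut.submatrix ⇑eM.symm ⇑fM.symm
  let V : Matrix (Fin n) (Fin n) R := Vt.submatrix ⇑fN.symm ⇑eN.symm
  have hUunit : IsUnit U := by
    refine ⟨⟨U, (⅟Ut).submatrix ⇑fM.symm ⇑eM.symm, ?_, ?_⟩, rfl⟩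
    · show Ut.submatrix ⇑eM.symm ⇑fM.symm * (⅟Ut).submatrix ⇑fM.symm ⇑eM.symm = 1
      rw [Matrix.submatrix_mul_equiv, mul_invOf_self, Matrix.submatrix_one_equiv]
    · show (⅟Ut).submatrix ⇑fM.symm ⇑eM.symm * Ut.submatrix ⇑eM.symm ⇑fM.symm = 1
      rw [Matrix.submatrix_mul_equiv, invOf_mul_self, Matrix.submatrix_one_equiv]
  have hVunit : IsUnit V := by
    refine ⟨⟨V, (⅟Vt).submatrix ⇑eN.symm ⇑fN.symm, ?_, ?_⟩, rfl⟩
    · show Vt.submatrix ⇑fN.symm ⇑eN.symm * (⅟Vt).submatrix ⇑eN.symm ⇑fN.symm = 1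
      rw [Matrix.submatrix_mul_equiv, mul_invOf_self, Matrix.submatrix_one_equiv]
    · show (⅟Vt).submatrix ⇑eN.symm ⇑fN.symm * Vt.submatrix ⇑fN.symm ⇑eN.symm = 1
      rw [Matrix.submatrix_mul_equiv, invOf_mul_self, Matrix.submatrix_one_equiv]
  refine ⟨U, V, (Matrix.isUnit_iff_isUnit_det U).mp hUunit,
    (Matrix.isUnit_iff_isUnit_det V).mp hVunit, ?_⟩
  -- Step 4 : the product identity
  have hS : stdRankMatrix R k m n
      = (fromBlocks (1 : Matrix (Fin k) (Fin k) R) 0 0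
          (0 : Matrix (Fin (m - k)) (Fin (n - k)) R)).submatrix ⇑fM.symm ⇑fN.symm := by
    have hvalM : ∀ x : Fin k ⊕ Fin (m - k),
        ((fM x : Fin m) : ℕ) = Sum.elim (fun t : Fin k => (t : ℕ))
          (fun t : Fin (m - k) => k + (t : ℕ)) x := by
      rintro (x | x) <;> simp [fM]
    have hvalN : ∀ x : Fin k ⊕ Fin (n - k),
        ((fN x : Fin n) : ℕ) = Sum.elim (fun t : Fin k => (t : ℕ))
          (fun t : Fin (n - k) => k + (t : ℕ)) x := by
      rintro (x | x) <;> simp [fN]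
    ext i j
    have hi : i = fM (fM.symm i) := (fM.apply_symm_apply i).symm
    have hj : j = fN (fN.symm j) := (fN.apply_symm_apply j).symm
    rw [Matrix.submatrix_apply]
    conv_lhs => rw [hi, hj]
    rcases hx : fM.symm i with x | x <;> rcases hy : fN.symm j with y | y <;>
      simp only [stdRankMatrix, Matrix.of_apply, hvalM, hvalN, Sum.elim_inl, Sum.elim_inr,
        Matrix.fromBlocks_apply₁₁, Matrix.fromBlocks_apply₁₂, Matrix.fromBlocks_apply₂₁,
        Matrix.fromBlocks_apply₂₂, Matrix.one_apply, Matrix.zero_apply]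
    · rcases eq_or_ne x y with h | h
      · simp [h, y.isLt]
      · have h' : (x : ℕ) ≠ (y : ℕ) := fun hc => h (Fin.ext hc)
        simp [h, h']
    · have h' : (x : ℕ) ≠ k + (y : ℕ) := by have := x.isLt; omega
      simp [h']
    · have h' : ¬ (k + (x : ℕ) < k) := by omega
      simp [h']
    · have h' : ¬ (k + (x : ℕ) < k) := by omega
      simp [h']
  have key : Ut * fromBlocks (1 : Matrix (Fin k) (Fin k) R) 0 0
      (0 : Matrix (Fin (m - k)) (Fin (n - k)) R) * Vt = (P * K).submatrix ⇑eM ⇑eN := by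
    rw [Matrix.mul_assoc, Matrix.fromBlocks_multiply, Matrix.fromBlocks_multiply]
    simp only [Matrix.one_mul, Matrix.mul_one, Matrix.zero_mul, Matrix.mul_zero,
      add_zero, zero_add]
    ext x y
    rcases x with s | s <;> rcases y with u | u <;>
      simp [Matrix.mul_apply, hBdef, hPdef, heM, heN]
  show A = U * stdRankMatrix R k m n * V
  rw [hS]
  show A = Ut.submatrix ⇑eM.symm ⇑fM.symm * Matrix.submatrix _ ⇑fM.symm ⇑fN.symm
      * Vt.submatrix ⇑fN.symm ⇑eN.symm
  rw [Matrix.submatrix_mul_equiv, Matrix.submatrix_mul_equiv, key]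
  ext i j
  rw [hPK]
  simp
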